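/- arXiv:2108.06390 — 2 statements merged into one kernel-verified Lean document; each statement's English description precedes it below -/
import Mathlib

section
/- There is an absolute constant C > 0 such that for every r > 0, the weak L^{4/3} norm in time of S_B satisfies sup_{λ>0} λ · |{ t > 0 : S_B(r,t) > λ }|^{3/4} ≤ C r^{−3/4}, where |·| denotes one-dimensional Lebesgue measure. -/
/-- The Bessel function of the first kind of integer order `n`, defined via the
integral representation `J_n(x) = (1/(2π)) ∫_{-π}^{π} e^{i(n s + x sin s)} ds`. -/
noncomputable def besselJ (n : ℤ) (x : ℝ) : ℝ :=
  (1 / (2 * Real.pi)) *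
    (∫ s in (-Real.pi)..Real.pi,
      Complex.exp (Complex.I * ((n : ℂ) * (s : ℂ) + (x : ℂ) * (Real.sin s : ℂ)))).re

/-- The Bessel part of the free Klein–Gordon sine propagator kernel in `ℝ³`:
`S_B(r,t) = (1/(4π)) 𝟙_{t ≥ r} J_1(√(t² − r²))/√(t² − r²)`, with the value at `t = r`
given by the limit `J_1(z)/z → 1/2`, i.e. `S_B(r,r) = 1/(8π)`. -/
noncomputable def SB (r t : ℝ) : ℝ :=
  (1 / (4 * Real.pi)) *
    (if r ≤ t then
      (if t = r then 1 / 2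
       else besselJ 1 (Real.sqrt (t ^ 2 - r ^ 2)) / Real.sqrt (t ^ 2 - r ^ 2))
     else 0)

set_option maxHeartbeats 1000000

open MeasureTheory intervalIntegral Set in
lemma vdc (c x a b m : ℝ) (hab : a ≤ b) (hm : 0 < m)
    (hlow : ∀ s ∈ Icc a b, m ≤ c + x * Real.cos s)
    (hsign : (∀ s ∈ Icc a b, 0 ≤ x * Real.sin s) ∨ (∀ s ∈ Icc a b, x * Real.sin s ≤ 0)) :
    ‖∫ s in a..b, Complex.exp (Complex.I * ((c * s + x * Real.sin s : ℝ) : ℂ))‖ ≤ 3 / m := by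
  set ψ' : ℝ → ℝ := fun s => c + x * Real.cos s with hψ'
  set F : ℝ → ℂ := fun s => Complex.exp (Complex.I * ((c * s + x * Real.sin s : ℝ) : ℂ)) with hF
  set u : ℝ → ℂ := fun s => (Complex.I * (ψ' s : ℂ))⁻¹ with hu
  set D : ℝ → ℂ := fun s =>
    F s * (-(((Complex.I * (ψ' s : ℂ)) ^ 2)⁻¹) * (Complex.I * ((-(x * Real.sin s) : ℝ) : ℂ))) with hD
  have huIcc : uIcc a b = Icc a b := uIcc_of_le hab
  have hψpos : ∀ s ∈ Icc a b, 0 < ψ' s := fun s hs => hm.trans_le (hlow s hs)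
  have hne : ∀ s ∈ Icc a b, (Complex.I * (ψ' s : ℂ)) ≠ 0 := fun s hs =>
    mul_ne_zero Complex.I_ne_zero (Complex.ofReal_ne_zero.2 (hψpos s hs).ne')
  have hFnorm : ∀ s : ℝ, ‖F s‖ = 1 := by
    intro s
    exact (by rw [mul_comm]; exact Complex.norm_exp_ofReal_mul_I _ :
      ‖Complex.exp (Complex.I * ((c * s + x * Real.sin s : ℝ) : ℂ))‖ = 1)
  have hph : ∀ s : ℝ, HasDerivAt (fun s : ℝ => c * s + x * Real.sin s) (ψ' s) s := by
    intro s
    exact (((hasDerivAt_id s).const_mul c).add ((Real.hasDerivAt_sin s).const_mul x)).congr_deriv (by simp [hψ'])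
  have hphC : ∀ s : ℝ, HasDerivAt (fun s : ℝ => Complex.I * ((c * s + x * Real.sin s : ℝ) : ℂ))
      (Complex.I * (ψ' s : ℂ)) s := by
    intro s
    exact ((hph s).ofReal_comp).const_mul Complex.I
  have hFderiv : ∀ s : ℝ, HasDerivAt F (F s * (Complex.I * (ψ' s : ℂ))) s := fun s => (hphC s).cexp
  have hψ'deriv : ∀ s : ℝ, HasDerivAt ψ' (-(x * Real.sin s)) s := by
    intro s
    have := ((Real.hasDerivAt_cos s).const_mul x).const_add c
    exact this.congr_deriv (by ring)
  have hψ'derivC : ∀ s : ℝ, HasDerivAt (fun s : ℝ => Complex.I * (ψ' s : ℂ))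
      (Complex.I * ((-(x * Real.sin s) : ℝ) : ℂ)) s := by
    intro s
    exact ((hψ'deriv s).ofReal_comp).const_mul Complex.I
  have huderiv : ∀ s ∈ Icc a b, HasDerivAt u
      (-(((Complex.I * (ψ' s : ℂ)) ^ 2)⁻¹) * (Complex.I * ((-(x * Real.sin s) : ℝ) : ℂ))) s := by
    intro s hs
    exact (hasDerivAt_inv (hne s hs)).comp s (hψ'derivC s)
  have hG : ∀ s ∈ Icc a b, HasDerivAt (fun s => F s * u s) (F s + D s) s := by
    intro s hs
    have h := (hFderiv s).mul (huderiv s hs)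
    have h2 : F s * (Complex.I * (ψ' s : ℂ)) * u s = F s := by
      rw [hu, mul_assoc, mul_inv_cancel₀ (hne s hs), mul_one]
    rw [hD] at *
    exact h2 ▸ h
  have hψ'cont : Continuous ψ' := by fun_prop
  have hFcont : Continuous F := by fun_prop
  have hDcontOn : ContinuousOn D (Icc a b) := by
    apply hFcont.continuousOn.mul
    apply ContinuousOn.mul
    · apply ContinuousOn.neg
      apply ContinuousOn.inv₀
      · fun_prop
      · intro s hs; exact pow_ne_zero 2 (hne s hs)
    · fun_prop
  have hFint : IntervalIntegrable F volume a b := hFcont.intervalIntegrable _ _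
  have hDint : IntervalIntegrable D volume a b := by
    apply ContinuousOn.intervalIntegrable
    rwa [huIcc]
  have hFTC : ∫ s in a..b, (F s + D s) = F b * u b - F a * u a := by
    apply integral_eq_sub_of_hasDerivAt
    · intro s hs
      exact hG s (huIcc ▸ hs)
    · exact hFint.add hDint
  have hsplit : ∫ s in a..b, F s = (F b * u b - F a * u a) - ∫ s in a..b, D s := by
    rw [← hFTC, integral_add hFint hDint]; ring
  have hend : ∀ s ∈ Icc a b, ‖F s * u s‖ ≤ 1 / m := by
    intro s hs
    rw [norm_mul, hFnorm, one_mul, hu, norm_inv, norm_mul, Complex.norm_I, one_mul,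
      Complex.norm_real, Real.norm_eq_abs, abs_of_pos (hψpos s hs), one_div]
    exact inv_anti₀ hm (hlow s hs)
  have hDnorm : ∀ s : ℝ, ‖D s‖ = |x * Real.sin s| / (ψ' s) ^ 2 := by
    intro s
    rw [hD, norm_mul, hFnorm, one_mul, norm_mul, norm_neg, norm_inv, norm_pow, norm_mul,
      Complex.norm_I, one_mul, norm_mul, Complex.norm_I, one_mul, Complex.norm_real,
      Complex.norm_real, Real.norm_eq_abs, Real.norm_eq_abs, abs_neg, sq_abs]
    rw [div_eq_inv_mul]
  have hinvderiv : ∀ s ∈ Icc a b, HasDerivAt (fun s => (ψ' s)⁻¹) ((x * Real.sin s) / (ψ' s) ^ 2) s := by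
    intro s hs
    have := (hψ'deriv s).inv (hψpos s hs).ne'
    exact this.congr_deriv (by ring)
  have hinvint : IntervalIntegrable (fun s => (x * Real.sin s) / (ψ' s) ^ 2) volume a b := by
    apply ContinuousOn.intervalIntegrable
    rw [huIcc]
    apply ContinuousOn.div
    · fun_prop
    · fun_prop
    · intro s hs; exact pow_ne_zero 2 (hψpos s hs).ne'
  have hinvFTC : ∫ s in a..b, (x * Real.sin s) / (ψ' s) ^ 2 = (ψ' b)⁻¹ - (ψ' a)⁻¹ := by
    apply integral_eq_sub_of_hasDerivAt
    · intro s hs; exact hinvderiv s (huIcc ▸ hs)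
    · exact hinvint
  have hma : a ∈ Icc a b := ⟨le_refl a, hab⟩
  have hmb : b ∈ Icc a b := ⟨hab, le_refl b⟩
  have hinv_le : ∀ s ∈ Icc a b, (ψ' s)⁻¹ ≤ 1 / m := by
    intro s hs; rw [one_div]; exact inv_anti₀ hm (hlow s hs)
  have hDbound : ‖∫ s in a..b, D s‖ ≤ 1 / m := by
    calc ‖∫ s in a..b, D s‖ ≤ ∫ s in a..b, ‖D s‖ :=
          intervalIntegral.norm_integral_le_integral_norm hab
      _ ≤ 1 / m := by
          rcases hsign with h | h
          · have heq : ∀ s ∈ uIcc a b, ‖D s‖ = (x * Real.sin s) / (ψ' s) ^ 2 := by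
              intro s hs
              rw [hDnorm s, abs_of_nonneg (h s (huIcc ▸ hs))]
            rw [integral_congr heq, hinvFTC]
            have h1 := hinv_le b hmb
            have h2 : 0 < (ψ' a)⁻¹ := inv_pos.2 (hψpos a hma)
            linarith
          · have heq : ∀ s ∈ uIcc a b, ‖D s‖ = -((x * Real.sin s) / (ψ' s) ^ 2) := by
              intro s hs
              rw [hDnorm s, abs_of_nonpos (h s (huIcc ▸ hs))]
              ring
            rw [integral_congr heq, intervalIntegral.integral_neg, hinvFTC]
            have h1 := hinv_le a hma
            have h2 : 0 < (ψ' b)⁻¹ := inv_pos.2 (hψpos b hmb)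
            linarith
  rw [hsplit]
  calc ‖(F b * u b - F a * u a) - ∫ s in a..b, D s‖
      ≤ ‖F b * u b - F a * u a‖ + ‖∫ s in a..b, D s‖ := norm_sub_le _ _
    _ ≤ (‖F b * u b‖ + ‖F a * u a‖) + ‖∫ s in a..b, D s‖ := by
        exact add_le_add_left (norm_sub_le _ _) _
    _ ≤ (1 / m + 1 / m) + 1 / m := by
        have h1 := hend b hmb
        have h2 := hend a hma
        gcongr <;> assumption
    _ = 3 / m := by ring

open MeasureTheory intervalIntegral Set

lemma myconj (f : ℝ → ℂ) (a b : ℝ) :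
    ∫ s in a..b, (starRingEnd ℂ) (f s) = (starRingEnd ℂ) (∫ s in a..b, f s) := by
  simp only [intervalIntegral, integral_conj, map_sub]

lemma conj_phase (c x s : ℝ) :
    (starRingEnd ℂ) (Complex.exp (Complex.I * ((-c * s + -x * Real.sin s : ℝ) : ℂ)))
      = Complex.exp (Complex.I * ((c * s + x * Real.sin s : ℝ) : ℂ)) := by
  rw [← Complex.exp_conj]
  congr 1
  rw [map_mul, Complex.conj_I, Complex.conj_ofReal]
  push_cast
  ring

lemma vdc_neg (c x a b m : ℝ) (hab : a ≤ b) (hm : 0 < m)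
    (hlow : ∀ s ∈ Icc a b, m ≤ -c + -x * Real.cos s)
    (hsign : (∀ s ∈ Icc a b, 0 ≤ -x * Real.sin s) ∨ (∀ s ∈ Icc a b, -x * Real.sin s ≤ 0)) :
    ‖∫ s in a..b, Complex.exp (Complex.I * ((c * s + x * Real.sin s : ℝ) : ℂ))‖ ≤ 3 / m := by
  have h1 : ∫ s in a..b, Complex.exp (Complex.I * ((c * s + x * Real.sin s : ℝ) : ℂ))
      = (starRingEnd ℂ)
          (∫ s in a..b, Complex.exp (Complex.I * ((-c * s + -x * Real.sin s : ℝ) : ℂ))) := by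
    rw [← myconj]
    exact intervalIntegral.integral_congr (fun s _ => (conj_phase c x s).symm)
  rw [h1, RCLike.norm_conj]
  exact vdc (-c) (-x) a b m hab hm hlow hsign


lemma besselJ_one_decay {x : ℝ} (hx : 49 ≤ x) : |besselJ 1 x| ≤ 24 / Real.sqrt x := by
  have hx0 : (0:ℝ) < x := by linarith
  have hs7 : (7:ℝ) ≤ Real.sqrt x := by
    have h := Real.sqrt_le_sqrt hx
    rwa [show (49:ℝ) = 7^2 by norm_num, Real.sqrt_sq (by norm_num : (0:ℝ) ≤ 7)] at h
  have hsp : (0:ℝ) < Real.sqrt x := by linarith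
  set δ : ℝ := 1 / Real.sqrt x with hδdef
  have hδpos : 0 < δ := by positivity
  have hδ7 : δ ≤ 1/7 := by
    rw [hδdef, div_le_div_iff₀ hsp (by norm_num)]; linarith
  have hδ1 : δ ≤ 1 := by linarith
  have hδsq : δ^2 * x = 1 := by
    rw [hδdef, div_pow, one_pow, Real.sq_sqrt hx0.le, one_div, inv_mul_cancel₀ hx0.ne']
  have hxδ : x * δ = Real.sqrt x := by
    rw [hδdef, mul_one_div, Real.div_sqrt]
  have hπ1 : (3.14:ℝ) ≤ Real.pi := by linarith [Real.pi_gt_d6]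
  have hπ2 : Real.pi ≤ 3.15 := by linarith [Real.pi_lt_d2]
  set p : ℝ := Real.pi/2 - δ with hpdef
  set q : ℝ := Real.pi/2 + 2*δ with hqdef
  have hp0 : 0 ≤ p := by rw [hpdef]; linarith
  have hqπ : q ≤ Real.pi := by rw [hqdef]; linarith
  have hpq : p ≤ q := by rw [hpdef, hqdef]; linarith
  have hppi : p ≤ Real.pi := by linarith
  -- cos values at the cut points
  have hcosp : Real.cos p = Real.sin δ := Real.cos_pi_div_two_sub δ
  have hcosq : Real.cos q = -Real.sin (2*δ) := by
    rw [hqdef, Real.cos_add, Real.cos_pi_div_two, Real.sin_pi_div_two]; ring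
  -- lower bounds for the derivative of the phase
  have hsin1 : δ - δ^3/4 < Real.sin δ := by
    have := Real.sin_gt_sub_cube hδpos; linarith [pow_pos hδpos 3]
  have e1 : x * (δ - δ^3/4) = Real.sqrt x - δ/4 := by
    have e : x * (δ - δ^3/4) = x*δ - δ*(δ^2*x)/4 := by ring
    rw [e, hxδ, hδsq]; ring
  have h1x : Real.sqrt x/2 ≤ x * Real.sin δ := by
    have h3 : x * (δ - δ^3/4) ≤ x * Real.sin δ :=
      mul_le_mul_of_nonneg_left hsin1.le hx0.le
    rw [e1] at h3
    linarith
  have hsin2 : 2*δ - (2*δ)^3/4 < Real.sin (2*δ) := by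
    have := Real.sin_gt_sub_cube (by linarith : (0:ℝ) < 2*δ)
    linarith [pow_pos (by linarith : (0:ℝ) < 2*δ) 3]
  have e2 : x * (2*δ - (2*δ)^3/4) = 2*Real.sqrt x - 2*δ := by
    have e : x * (2*δ - (2*δ)^3/4) = 2*(x*δ) - 2*δ*(δ^2*x) := by ring
    rw [e, hxδ, hδsq]; ring
  have h2x : Real.sqrt x ≤ -1 + x * Real.sin (2*δ) := by
    have h3 : x * (2*δ - (2*δ)^3/4) ≤ x * Real.sin (2*δ) :=
      mul_le_mul_of_nonneg_left hsin2.le hx0.le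
    rw [e2] at h3
    linarith
  have hlow_mid : ∀ s ∈ Icc (-p) p, Real.sqrt x / 2 ≤ 1 + x * Real.cos s := by
    intro s hs
    have hps : Real.cos p ≤ Real.cos s := by
      rcases le_or_gt 0 s with h | h
      · exact Real.cos_le_cos_of_nonneg_of_le_pi h hppi hs.2
      · rw [← Real.cos_neg s]
        exact Real.cos_le_cos_of_nonneg_of_le_pi (by linarith) hppi (by linarith [hs.1])
    rw [hcosp] at hps
    have := mul_le_mul_of_nonneg_left hps hx0.le
    linarith
  have hlow_right : ∀ s ∈ Icc q Real.pi, Real.sqrt x ≤ -1 + -x * Real.cos s := by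
    intro s hs
    have hqs : Real.cos s ≤ Real.cos q :=
      Real.cos_le_cos_of_nonneg_of_le_pi (by rw [hqdef]; linarith) hs.2 hs.1
    rw [hcosq] at hqs
    have := mul_le_mul_of_nonneg_left hqs hx0.le
    have h4 : x * Real.cos s ≤ -(x * Real.sin (2*δ)) := by linarith [this]
    linarith
  have hlow_left : ∀ s ∈ Icc (-Real.pi) (-q), Real.sqrt x ≤ -1 + -x * Real.cos s := by
    intro s hs
    have hmem : -s ∈ Icc q Real.pi := ⟨by linarith [hs.2], by linarith [hs.1]⟩
    have := hlow_right (-s) hmem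
    rwa [Real.cos_neg] at this
  -- the integrand
  set f : ℝ → ℂ := fun s => Complex.exp (Complex.I * ((1 * s + x * Real.sin s : ℝ) : ℂ)) with hfdef
  have hfc : Continuous f := by fun_prop
  have hint : ∀ a b : ℝ, IntervalIntegrable f volume a b := fun a b =>
    hfc.intervalIntegrable a b
  have hfnorm : ∀ s : ℝ, ‖f s‖ = 1 := by
    intro s
    rw [hfdef]
    exact (by rw [mul_comm]; exact Complex.norm_exp_ofReal_mul_I _ :
      ‖Complex.exp (Complex.I * ((1 * s + x * Real.sin s : ℝ) : ℂ))‖ = 1)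
  -- splitting
  have hsplit : ∫ s in (-Real.pi)..Real.pi, f s =
      ((((∫ s in (-Real.pi)..(-q), f s) + ∫ s in (-q)..(-p), f s) + ∫ s in (-p)..(0:ℝ), f s)
         + ∫ s in (0:ℝ)..p, f s) + ((∫ s in p..q, f s) + ∫ s in q..Real.pi, f s) := by
    rw [integral_add_adjacent_intervals (hint p q) (hint q Real.pi),
        integral_add_adjacent_intervals (hint (-Real.pi) (-q)) (hint (-q) (-p)),
        integral_add_adjacent_intervals (hint (-Real.pi) (-p)) (hint (-p) 0),
        integral_add_adjacent_intervals (hint (-Real.pi) 0) (hint 0 p),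
        integral_add_adjacent_intervals (hint (-Real.pi) p) (hint p Real.pi)]
  -- bounds on the six pieces
  have B1 : ‖∫ s in (-Real.pi)..(-q), f s‖ ≤ 3 / Real.sqrt x := by
    apply vdc_neg 1 x _ _ _ (by linarith) hsp
    · intro s hs
      have := hlow_left s hs
      linarith [this]
    · left
      intro s hs
      have : Real.sin s ≤ 0 :=
        Real.sin_nonpos_of_nonpos_of_neg_pi_le (by linarith [hs.2, hδpos, hπ1]) hs.1
      nlinarith
  have B6 : ‖∫ s in q..Real.pi, f s‖ ≤ 3 / Real.sqrt x := by
    apply vdc_neg 1 x _ _ _ (by linarith) hsp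
    · intro s hs
      have := hlow_right s hs
      linarith [this]
    · right
      intro s hs
      have : 0 ≤ Real.sin s := Real.sin_nonneg_of_nonneg_of_le_pi (by linarith [hs.1]) hs.2
      nlinarith
  have B3 : ‖∫ s in (-p)..(0:ℝ), f s‖ ≤ 3 / (Real.sqrt x / 2) := by
    apply vdc 1 x _ _ _ (by linarith) (by positivity)
    · intro s hs
      exact hlow_mid s ⟨hs.1, by linarith [hs.2]⟩
    · right
      intro s hs
      have : Real.sin s ≤ 0 :=
        Real.sin_nonpos_of_nonpos_of_neg_pi_le hs.2 (by linarith [hs.1])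
      nlinarith
  have B4 : ‖∫ s in (0:ℝ)..p, f s‖ ≤ 3 / (Real.sqrt x / 2) := by
    apply vdc 1 x _ _ _ hp0 (by positivity)
    · intro s hs
      exact hlow_mid s ⟨by linarith [hs.1], hs.2⟩
    · left
      intro s hs
      have : 0 ≤ Real.sin s := Real.sin_nonneg_of_nonneg_of_le_pi hs.1 (by linarith [hs.2])
      nlinarith
  have B2 : ‖∫ s in (-q)..(-p), f s‖ ≤ 3*δ := by
    have h := intervalIntegral.norm_integral_le_of_norm_le_const
      (C := 1) (f := f) (a := -q) (b := -p) (fun s _ => (hfnorm s).le)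
    rw [one_mul] at h
    calc ‖∫ s in (-q)..(-p), f s‖ ≤ |(-p) - (-q)| := h
      _ = 3*δ := by rw [abs_of_nonneg (by linarith)]; rw [hpdef, hqdef]; ring
  have B5 : ‖∫ s in p..q, f s‖ ≤ 3*δ := by
    have h := intervalIntegral.norm_integral_le_of_norm_le_const
      (C := 1) (f := f) (a := p) (b := q) (fun s _ => (hfnorm s).le)
    rw [one_mul] at h
    calc ‖∫ s in p..q, f s‖ ≤ |q - p| := h
      _ = 3*δ := by rw [abs_of_nonneg (by linarith)]; rw [hpdef, hqdef]; ring
  have htot : ‖∫ s in (-Real.pi)..Real.pi, f s‖ ≤ 24 / Real.sqrt x := by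
    rw [hsplit]
    have hδeq : 3*δ = 3 / Real.sqrt x := by rw [hδdef]; ring
    have c1 := norm_add_le ((((∫ s in (-Real.pi)..(-q), f s) + ∫ s in (-q)..(-p), f s) + ∫ s in (-p)..(0:ℝ), f s)
         + ∫ s in (0:ℝ)..p, f s) ((∫ s in p..q, f s) + ∫ s in q..Real.pi, f s)
    have c2 := norm_add_le (((∫ s in (-Real.pi)..(-q), f s) + ∫ s in (-q)..(-p), f s) + ∫ s in (-p)..(0:ℝ), f s) (∫ s in (0:ℝ)..p, f s)
    have c3 := norm_add_le ((∫ s in (-Real.pi)..(-q), f s) + ∫ s in (-q)..(-p), f s) (∫ s in (-p)..(0:ℝ), f s)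
    have c4 := norm_add_le (∫ s in (-Real.pi)..(-q), f s) (∫ s in (-q)..(-p), f s)
    have c5 := norm_add_le (∫ s in p..q, f s) (∫ s in q..Real.pi, f s)
    have e3 : 3 / (Real.sqrt x / 2) = 6 / Real.sqrt x := by
      field_simp
      norm_num
    rw [e3] at B3 B4
    rw [hδeq] at B2 B5
    have : (3:ℝ)/Real.sqrt x + 3/Real.sqrt x + 6/Real.sqrt x + 6/Real.sqrt x
        + 3/Real.sqrt x + 3/Real.sqrt x = 24/Real.sqrt x := by ring
    linarith
  -- conclude
  have hcongr : (∫ s in (-Real.pi)..Real.pi,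
      Complex.exp (Complex.I * (((1:ℤ) : ℂ) * (s : ℂ) + (x : ℂ) * (Real.sin s : ℂ))))
      = ∫ s in (-Real.pi)..Real.pi, f s := by
    apply intervalIntegral.integral_congr
    intro s _
    rw [hfdef]
    norm_num
  rw [besselJ, abs_mul, hcongr]
  have hre : |(∫ s in (-Real.pi)..Real.pi, f s).re| ≤ 24 / Real.sqrt x :=
    le_trans (Complex.abs_re_le_norm _) htot
  have hc : |1 / (2*Real.pi)| ≤ 1 := by
    rw [abs_of_pos (by positivity)]
    rw [div_le_one (by positivity)]
    linarith
  calc |1 / (2*Real.pi)| * |(∫ s in (-Real.pi)..Real.pi, f s).re|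
      ≤ 1 * (24 / Real.sqrt x) := by
        apply mul_le_mul hc hre (abs_nonneg _) (by norm_num)
    _ = 24 / Real.sqrt x := one_mul _

lemma besselJ_abs_le_one (n : ℤ) (x : ℝ) : |besselJ n x| ≤ 1 := by
  have hπ : (0:ℝ) < Real.pi := Real.pi_pos
  have h1 : ‖∫ s in (-Real.pi)..Real.pi,
      Complex.exp (Complex.I * ((n : ℂ) * (s : ℂ) + (x : ℂ) * (Real.sin s : ℂ)))‖
      ≤ 1 * |Real.pi - -Real.pi| := by
    apply intervalIntegral.norm_integral_le_of_norm_le_const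
    intro s _
    rw [Complex.norm_exp]
    have : (Complex.I * ((n : ℂ) * (s : ℂ) + (x : ℂ) * (Real.sin s : ℂ))).re = 0 := by
      simp [Complex.mul_re, Complex.add_im, Complex.mul_im]
    rw [this, Real.exp_zero]
  rw [abs_of_nonneg (by linarith : (0:ℝ) ≤ Real.pi - -Real.pi), one_mul] at h1
  rw [besselJ, abs_mul, abs_of_pos (by positivity : (0:ℝ) < 1/(2*Real.pi))]
  have h2 := le_trans (Complex.abs_re_le_norm
    (∫ s in (-Real.pi)..Real.pi,
      Complex.exp (Complex.I * ((n : ℂ) * (s : ℂ) + (x : ℂ) * (Real.sin s : ℂ))))) h1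
  calc 1/(2*Real.pi) * |(∫ s in (-Real.pi)..Real.pi,
        Complex.exp (Complex.I * ((n : ℂ) * (s : ℂ) + (x : ℂ) * (Real.sin s : ℂ)))).re|
      ≤ 1/(2*Real.pi) * (Real.pi - -Real.pi) := by
        apply mul_le_mul_of_nonneg_left h2 (by positivity)
    _ = 1 := by field_simp; ring
  
lemma besselJ_one_bound {z : ℝ} (hz : 0 < z) : |besselJ 1 z| ≤ 24 / Real.sqrt z := by
  rcases le_or_gt 49 z with h | h
  · exact besselJ_one_decay h
  · refine le_trans (besselJ_abs_le_one 1 z) ?_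
    rw [le_div_iff₀ (Real.sqrt_pos.2 hz)]
    have h1 : Real.sqrt z ≤ 7 := by
      have := Real.sqrt_le_sqrt h.le
      rwa [show (49:ℝ) = 7^2 by norm_num, Real.sqrt_sq (by norm_num : (0:ℝ) ≤ 7)] at this
    linarith

lemma SB_le {r t : ℝ} (hr : 0 < r) (hrt : r < t) :
    SB r t ≤ 2 / (t^2 - r^2) ^ ((3:ℝ)/4) := by
  set w : ℝ := t^2 - r^2 with hw
  have hw0 : 0 < w := by rw [hw]; nlinarith
  set z : ℝ := Real.sqrt w with hz
  have hz0 : 0 < z := Real.sqrt_pos.2 hw0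
  rw [SB, if_pos hrt.le, if_neg hrt.ne']
  have hJ : besselJ 1 z ≤ 24 / Real.sqrt z :=
    le_trans (le_abs_self _) (besselJ_one_bound hz0)
  have hb : besselJ 1 z / z ≤ 24 / (Real.sqrt z * z) := by
    rw [show 24 / (Real.sqrt z * z) = (24 / Real.sqrt z) / z by rw [div_div]]
    gcongr
  have hzz : Real.sqrt z * z = w ^ ((3:ℝ)/4) := by
    have h1 : Real.sqrt z * z = z ^ ((3:ℝ)/2) := by
      rw [Real.sqrt_eq_rpow]
      nth_rewrite 2 [← Real.rpow_one z]
      rw [← Real.rpow_add hz0]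
      norm_num
    rw [h1, hz, Real.sqrt_eq_rpow, ← Real.rpow_mul hw0.le]
    norm_num
  rw [hzz] at hb
  have hpos : (0:ℝ) < w ^ ((3:ℝ)/4) := Real.rpow_pos_of_pos hw0 _
  have hc : 1/(4*Real.pi) ≤ 1/12 := by
    rw [div_le_div_iff₀ (by positivity) (by norm_num)]
    linarith [Real.pi_gt_d6]
  calc 1/(4*Real.pi) * (besselJ 1 z / z)
      ≤ 1/(4*Real.pi) * (24 / w ^ ((3:ℝ)/4)) :=
        mul_le_mul_of_nonneg_left hb (by positivity)
    _ ≤ 1/12 * (24 / w ^ ((3:ℝ)/4)) :=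
        mul_le_mul_of_nonneg_right hc (by positivity)
    _ = 2 / w ^ ((3:ℝ)/4) := by ring


/-- There is an absolute constant `C > 0` such that for every `r > 0`, the weak
`L^{4/3}` norm in time of `S_B` satisfies
`sup_{λ>0} λ |{t > 0 : S_B(r,t) > λ}|^{3/4} ≤ C r^{−3/4}`. -/
theorem SB_weak_L43_bound :
    ∃ C : ℝ, 0 < C ∧ ∀ r : ℝ, 0 < r → ∀ lam : ℝ, 0 < lam →
      ENNReal.ofReal lam *
        (MeasureTheory.volume {t : ℝ | 0 < t ∧ lam < SB r t}) ^ ((3 : ℝ) / 4) ≤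
      ENNReal.ofReal (C * r ^ (-(3 : ℝ) / 4)) := by
  refine ⟨2, by norm_num, ?_⟩
  intro r hr lam hlam
  set A : ℝ := (2/lam) ^ ((4:ℝ)/3) with hA
  have h2l : (0:ℝ) < 2/lam := by positivity
  have hA0 : 0 < A := Real.rpow_pos_of_pos h2l _
  have hsub : {t : ℝ | 0 < t ∧ lam < SB r t} ⊆ Icc r (Real.sqrt (r^2 + A)) := by
    rintro t ⟨ht0, hlt⟩
    have hrt : r ≤ t := by
      by_contra h
      push_neg at h
      have h0 : SB r t = 0 := by rw [SB, if_neg (not_le.2 h)]; ring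
      rw [h0] at hlt; linarith
    refine ⟨hrt, ?_⟩
    rcases eq_or_lt_of_le hrt with he | hlt2
    · rw [← he]
      have : r^2 ≤ r^2 + A := by linarith
      calc r = Real.sqrt (r^2) := by rw [Real.sqrt_sq hr.le]
        _ ≤ Real.sqrt (r^2 + A) := Real.sqrt_le_sqrt this
    · have hSB := SB_le hr hlt2
      set w : ℝ := t^2 - r^2 with hw
      have hw0 : 0 < w := by rw [hw]; nlinarith
      have hwpos : (0:ℝ) < w ^ ((3:ℝ)/4) := Real.rpow_pos_of_pos hw0 _
      have h1 : lam < 2 / w ^ ((3:ℝ)/4) := lt_of_lt_of_le hlt hSB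
      have h2 : w ^ ((3:ℝ)/4) < 2/lam := by
        rw [lt_div_iff₀ hwpos] at h1
        rw [lt_div_iff₀ hlam]
        linarith [h1]
      have h3 : w < A := by
        have h4 := Real.rpow_lt_rpow (Real.rpow_nonneg hw0.le _) h2
          (by norm_num : (0:ℝ) < 4/3)
        rwa [← Real.rpow_mul hw0.le, show ((3:ℝ)/4) * (4/3) = 1 by norm_num,
          Real.rpow_one] at h4
      have h5 : t^2 < r^2 + A := by rw [hw] at h3; linarith
      exact ((Real.lt_sqrt ht0.le).2 h5).le
  have hvol : MeasureTheory.volume {t : ℝ | 0 < t ∧ lam < SB r t}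
      ≤ ENNReal.ofReal (A/(2*r)) := by
    refine le_trans (measure_mono hsub) ?_
    rw [Real.volume_Icc]
    apply ENNReal.ofReal_le_ofReal
    have h1 : Real.sqrt (r^2+A) ≤ r + A/(2*r) := by
      have h2 : Real.sqrt (r^2+A) ≤ Real.sqrt ((r + A/(2*r))^2) := by
        apply Real.sqrt_le_sqrt
        have h3 := sq_nonneg (A/(2*r))
        have h4 : 2*r*(A/(2*r)) = A := by field_simp
        nlinarith
      rwa [Real.sqrt_sq (by positivity)] at h2
    linarith
  calc ENNReal.ofReal lam *
        (MeasureTheory.volume {t : ℝ | 0 < t ∧ lam < SB r t}) ^ ((3 : ℝ) / 4)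
      ≤ ENNReal.ofReal lam * (ENNReal.ofReal (A/(2*r))) ^ ((3:ℝ)/4) := by
        exact mul_le_mul_right (ENNReal.rpow_le_rpow hvol (by norm_num)) _
    _ = ENNReal.ofReal (lam * (A/(2*r)) ^ ((3:ℝ)/4)) := by
        rw [ENNReal.ofReal_rpow_of_nonneg (by positivity) (by norm_num : (0:ℝ) ≤ 3/4),
          ← ENNReal.ofReal_mul hlam.le]
    _ ≤ ENNReal.ofReal (2 * r ^ (-(3 : ℝ) / 4)) := by
        apply ENNReal.ofReal_le_ofReal
        have e1 : (A/(2*r)) ^ ((3:ℝ)/4) = A ^ ((3:ℝ)/4) / (2*r) ^ ((3:ℝ)/4) :=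
          Real.div_rpow hA0.le (by positivity) ((3:ℝ)/4)
        have e2 : A ^ ((3:ℝ)/4) = 2/lam := by
          rw [hA, ← Real.rpow_mul h2l.le, show ((4:ℝ)/3) * (3/4) = 1 by norm_num,
            Real.rpow_one]
        have e3 : r ^ ((3:ℝ)/4) ≤ (2*r) ^ ((3:ℝ)/4) :=
          Real.rpow_le_rpow hr.le (by linarith) (by norm_num)
        have hrp : (0:ℝ) < r ^ ((3:ℝ)/4) := Real.rpow_pos_of_pos hr _
        have e4 : r ^ (-(3 : ℝ) / 4) = (r ^ ((3:ℝ)/4))⁻¹ := by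
          rw [show (-(3 : ℝ) / 4) = -((3:ℝ)/4) by ring, Real.rpow_neg hr.le]
        rw [e1, e2, e4]
        have key : lam * (2 / lam / (2*r) ^ ((3:ℝ)/4)) = 2 / (2*r) ^ ((3:ℝ)/4) := by
          field_simp
        rw [key, div_eq_mul_inv]
        gcongr
end

section
/- There exist absolute constants ε₀ > 0 such that the following holds. Let λ > 0 and let V : ℝ³ → ℝ be measurable with a decomposition V = V₁ + V₂ where V₁ is bounded, measurable and supported in a ball of radius R, and sup_{x∈ℝ³} ∫_{ℝ³} |V₂(y)| / ‖x − y‖ dy ≤ ε₀. Suppose ψ : ℝ³ → ℂ is bounded and measurable and satisfies, for almost every x, ψ(x) = −(1/(4π)) ∫_{ℝ³} ( e^{−λ‖x−y‖} / ‖x − y‖ ) V(y) ψ(y) dy. Then there exists a constant C > 0 (depending on λ, R, ‖V₁‖_∞ and ‖ψ‖_∞) such that |ψ(x)| ≤ C (1 + ‖x‖)^{−1} e^{−λ‖x‖} for almost every x ∈ ℝ³. (Sharp Agmon estimate: an L^∞ eigenfunction of −Δ + V with eigenvalue −λ², expressed via the resolvent equation ψ = −R₀(−λ²)Vψ, decays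 like ⟨x⟩^{−1} e^{−λ|x|}.) -/
open MeasureTheory Metric

set_option maxHeartbeats 2000000

noncomputable abbrev E3' := EuclideanSpace ℝ (Fin 3)

lemma lint_inv_norm_lt_top {ρ : ℝ} (hρ : 0 < ρ) :
    ∫⁻ z in closedBall (0:E3') ρ, ENNReal.ofReal ‖z‖⁻¹ < ⊤ := by
  have hb : ∀ z : E3', (closedBall (0:E3') ρ).indicator (fun z => ENNReal.ofReal ‖z‖⁻¹) z ≤
      ∑' n : ℕ, (closedBall (0:E3') (ρ / 2 ^ n)).indicator
        (fun _ => ENNReal.ofReal (2 ^ (n+1) / ρ)) z := by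
    intro z
    by_cases hz : z ∈ closedBall (0:E3') ρ
    · rw [Set.indicator_of_mem hz]
      rcases eq_or_ne z 0 with rfl | hz0
      · simp
      have hzpos : 0 < ‖z‖ := norm_pos_iff.2 hz0
      have hzρ : ‖z‖ ≤ ρ := by simpa [dist_eq_norm] using hz
      set t : ℝ := Real.logb 2 (ρ / ‖z‖) with ht
      have hrat : 1 ≤ ρ / ‖z‖ := (one_le_div hzpos).2 hzρ
      have ht0 : 0 ≤ t := Real.logb_nonneg one_lt_two hrat
      set n : ℕ := ⌊t⌋₊ with hn
      have h1 : (2:ℝ) ^ (n:ℝ) ≤ ρ / ‖z‖ := by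
        calc (2:ℝ) ^ (n:ℝ) ≤ 2 ^ t := by
              apply Real.rpow_le_rpow_of_exponent_le one_le_two (Nat.floor_le ht0)
        _ = ρ / ‖z‖ := Real.rpow_logb two_pos (by norm_num) (by positivity)
      have h2 : ρ / ‖z‖ < (2:ℝ) ^ ((n:ℝ) + 1) := by
        calc ρ / ‖z‖ = 2 ^ t := (Real.rpow_logb two_pos (by norm_num) (by positivity)).symm
        _ < 2 ^ ((n:ℝ)+1) := by
              apply Real.rpow_lt_rpow_of_exponent_lt one_lt_two
              exact_mod_cast Nat.lt_floor_add_one t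
      rw [show ((n:ℝ)) = ((n:ℕ):ℝ) from rfl, Real.rpow_natCast] at h1
      rw [show ((n:ℝ) + 1) = (((n+1:ℕ)):ℝ) by push_cast; ring, Real.rpow_natCast] at h2
      have hmem : z ∈ closedBall (0:E3') (ρ / 2 ^ n) := by
        simp only [mem_closedBall, dist_zero_right]
        rw [le_div_iff₀ (by positivity)]
        calc ‖z‖ * 2 ^ n ≤ ‖z‖ * (ρ / ‖z‖) := by
              apply mul_le_mul_of_nonneg_left h1 (norm_nonneg _)
        _ = ρ := by field_simp
      calc ENNReal.ofReal ‖z‖⁻¹ ≤ ENNReal.ofReal (2 ^ (n+1) / ρ) := by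
            apply ENNReal.ofReal_le_ofReal
            rw [le_div_iff₀ hρ, inv_mul_eq_div]
            exact h2.le
      _ ≤ _ := by
            refine le_trans (le_of_eq ?_) (ENNReal.le_tsum n)
            rw [Set.indicator_of_mem hmem]
    · rw [Set.indicator_of_notMem hz]; exact zero_le
  have hmeas : ∀ n : ℕ, MeasurableSet (closedBall (0:E3') (ρ / 2 ^ n)) :=
    fun n => measurableSet_closedBall
  calc ∫⁻ z in closedBall (0:E3') ρ, ENNReal.ofReal ‖z‖⁻¹
      = ∫⁻ z, (closedBall (0:E3') ρ).indicator (fun z => ENNReal.ofReal ‖z‖⁻¹) z := by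
        rw [lintegral_indicator measurableSet_closedBall]
    _ ≤ ∫⁻ z, ∑' n : ℕ, (closedBall (0:E3') (ρ / 2 ^ n)).indicator
          (fun _ => ENNReal.ofReal (2 ^ (n+1) / ρ)) z := lintegral_mono hb
    _ = ∑' n : ℕ, ∫⁻ z, (closedBall (0:E3') (ρ / 2 ^ n)).indicator
          (fun _ => ENNReal.ofReal (2 ^ (n+1) / ρ)) z := by
        apply lintegral_tsum
        exact fun n => ((measurable_const).indicator (hmeas n)).aemeasurable
    _ = ∑' n : ℕ, ENNReal.ofReal (2 ^ (n+1) / ρ) * volume (closedBall (0:E3') (ρ / 2 ^ n)) := by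
        congr 1; ext n
        rw [lintegral_indicator (hmeas n), setLIntegral_const]
    _ = ∑' n : ℕ, ENNReal.ofReal (2 ^ (n+1) / ρ) * (ENNReal.ofReal ((ρ / 2 ^ n) ^ 3)
          * volume (ball (0:E3') 1)) := by
        congr 1; ext n
        rw [MeasureTheory.Measure.addHaar_closedBall (μ := (volume : Measure E3')) 0
          (by positivity)]
        norm_num
    _ = ∑' n : ℕ, ENNReal.ofReal (2 * ρ^2) * ENNReal.ofReal ((1/4:ℝ)) ^ n
          * volume (ball (0:E3') 1) := by
        congr 1; ext n
        rw [← mul_assoc, ← ENNReal.ofReal_mul (by positivity), ← ENNReal.ofReal_pow (by norm_num),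
          ← ENNReal.ofReal_mul (by positivity)]
        congr 2
        field_simp
        have h4 : ((2:ℝ)^n)^2 * (1/4)^n = 1 := by rw [← pow_mul, pow_mul', ← mul_pow]; norm_num
        linear_combination (-(2:ℝ)^n*2) * h4
    _ = ENNReal.ofReal (2 * ρ^2) * (1 - ENNReal.ofReal ((1/4:ℝ)))⁻¹
          * volume (ball (0:E3') 1) := by
        rw [ENNReal.tsum_mul_right, ENNReal.tsum_mul_left, ENNReal.tsum_geometric]
    _ < ⊤ := by
        have h34 : (1 : ENNReal) - ENNReal.ofReal (1/4:ℝ) = ENNReal.ofReal (3/4 : ℝ) := by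
          rw [← ENNReal.ofReal_one, ← ENNReal.ofReal_sub] <;> norm_num
        apply ENNReal.mul_lt_top
        · apply ENNReal.mul_lt_top ENNReal.ofReal_lt_top
          rw [h34]
          exact ENNReal.inv_lt_top.2 (ENNReal.ofReal_pos.2 (by norm_num))
        · exact measure_ball_lt_top

lemma lint_translate (x : E3') (ρ : ℝ) :
    ∫⁻ y, (closedBall x ρ).indicator (fun y => ENNReal.ofReal ‖x - y‖⁻¹) y
      = ∫⁻ z in closedBall (0:E3') ρ, ENNReal.ofReal ‖z‖⁻¹ := by
  have : ∀ y : E3', (closedBall x ρ).indicator (fun y => ENNReal.ofReal ‖x - y‖⁻¹) y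
      = (closedBall (0:E3') ρ).indicator (fun z => ENNReal.ofReal ‖z‖⁻¹) (y - x) := by
    intro y
    by_cases hy : y ∈ closedBall x ρ
    · have hy' : y - x ∈ closedBall (0:E3') ρ := by
        simpa [dist_eq_norm] using hy
      rw [Set.indicator_of_mem hy, Set.indicator_of_mem hy', norm_sub_rev]
    · have hy' : y - x ∉ closedBall (0:E3') ρ := by
        simp only [mem_closedBall, dist_eq_norm] at hy ⊢
        simpa using hy
      rw [Set.indicator_of_notMem hy, Set.indicator_of_notMem hy']
  simp_rw [this]
  rw [lintegral_sub_right_eq_self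
    ((closedBall (0:E3') ρ).indicator (fun z => ENNReal.ofReal ‖z‖⁻¹)) x,
    lintegral_indicator measurableSet_closedBall]


lemma weight_key {lam : ℝ} (hlam : 0 < lam) (N : ℝ) (hN : 0 ≤ N) (x y : E3') (hy : y ≠ 0) :
    min ((1+‖x‖) * Real.exp (lam * ‖x‖)) N * (Real.exp (-lam * ‖x-y‖) / ‖x-y‖)
      ≤ (‖x-y‖⁻¹ + ‖y‖⁻¹) * min ((1+‖y‖) * Real.exp (lam * ‖y‖)) N := by
  set a := ‖x‖
  set b := ‖y‖
  set d := ‖x - y‖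
  have hb : 0 < b := norm_pos_iff.2 hy
  have ha : 0 ≤ a := norm_nonneg _
  have hd0 : 0 ≤ d := norm_nonneg _
  have habd : a ≤ b + d := by
    calc a = ‖y + (x - y)‖ := by rw [add_sub_cancel]
    _ ≤ b + d := norm_add_le _ _
  have hwx : 0 ≤ (1+a) * Real.exp (lam * a) := by positivity
  have hwy : 0 ≤ (1+b) * Real.exp (lam * b) := by positivity
  have hminy : 0 ≤ min ((1+b) * Real.exp (lam * b)) N := le_min hwy hN
  have hminx : 0 ≤ min ((1+a) * Real.exp (lam * a)) N := le_min hwx hN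
  rcases eq_or_lt_of_le hd0 with hd | hd
  · rw [← hd]
    simp
    positivity
  -- main case d > 0
  have key : min ((1+a) * Real.exp (lam * a)) N * Real.exp (-lam * d) * b
      ≤ min ((1+b) * Real.exp (lam * b)) N * (b + d) := by
    rcases le_total ((1+a) * Real.exp (lam * a)) ((1+b) * Real.exp (lam * b)) with hw | hw
    · have h1 : min ((1+a) * Real.exp (lam * a)) N ≤ min ((1+b) * Real.exp (lam * b)) N :=
        min_le_min hw le_rfl
      have h2 : Real.exp (-lam * d) ≤ 1 := by
        calc Real.exp (-lam * d) ≤ Real.exp 0 := Real.exp_le_exp.2 (by nlinarith)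
        _ = 1 := Real.exp_zero
      calc min ((1+a) * Real.exp (lam * a)) N * Real.exp (-lam * d) * b
          ≤ min ((1+b) * Real.exp (lam * b)) N * 1 * b := by
            apply mul_le_mul_of_nonneg_right _ hb.le
            exact mul_le_mul h1 h2 (Real.exp_pos _).le hminy
        _ = min ((1+b) * Real.exp (lam * b)) N * b := by ring
        _ ≤ min ((1+b) * Real.exp (lam * b)) N * (b + d) := by
            apply mul_le_mul_of_nonneg_left (by linarith) hminy
    · -- w y ≤ w x
      have hmin : min ((1+a) * Real.exp (lam * a)) N * ((1+b) * Real.exp (lam * b))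
          ≤ min ((1+b) * Real.exp (lam * b)) N * ((1+a) * Real.exp (lam * a)) := by
        rcases le_total ((1+b) * Real.exp (lam * b)) N with h | h
        · rw [min_eq_left h, mul_comm ((1+b) * Real.exp (lam * b))]
          exact mul_le_mul_of_nonneg_right (min_le_left _ _) hwy
        · rw [min_eq_right h]
          exact mul_le_mul (min_le_right _ _) hw (by positivity) hN
      have hcl : (1+a) * Real.exp (lam * a) * Real.exp (-lam * d) * b
          ≤ (1+b) * Real.exp (lam * b) * (b + d) := by
        have he : Real.exp (lam * a) * Real.exp (-lam * d) = Real.exp (lam * a - lam * d) := by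
          rw [← Real.exp_add]; ring_nf
        have he2 : Real.exp (lam * a - lam * d) ≤ Real.exp (lam * b) := by
          apply Real.exp_le_exp.2
          nlinarith
        have hab : (1+a) * b ≤ (1+b) * (b+d) := by nlinarith
        calc (1+a) * Real.exp (lam * a) * Real.exp (-lam * d) * b
            = (1+a) * b * Real.exp (lam * a - lam * d) := by rw [← he]; ring
          _ ≤ (1+b) * (b+d) * Real.exp (lam * b) := by
              apply mul_le_mul hab he2 (Real.exp_pos _).le (by positivity)
          _ = (1+b) * Real.exp (lam * b) * (b + d) := by ring
      -- combine: multiply hmin by exp(-λd)*b ≥ 0 and use hcl, cancel w y > 0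
      have hwypos : 0 < (1+b) * Real.exp (lam * b) := by positivity
      have step : min ((1+a) * Real.exp (lam * a)) N * Real.exp (-lam * d) * b
            * ((1+b) * Real.exp (lam * b))
          ≤ min ((1+b) * Real.exp (lam * b)) N * (b + d) * ((1+b) * Real.exp (lam * b)) := by
        calc min ((1+a) * Real.exp (lam * a)) N * Real.exp (-lam * d) * b
              * ((1+b) * Real.exp (lam * b))
            = (min ((1+a) * Real.exp (lam * a)) N * ((1+b) * Real.exp (lam * b)))
              * (Real.exp (-lam * d) * b) := by ring
          _ ≤ (min ((1+b) * Real.exp (lam * b)) N * ((1+a) * Real.exp (lam * a)))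
              * (Real.exp (-lam * d) * b) := by
              apply mul_le_mul_of_nonneg_right hmin (by positivity)
          _ = min ((1+b) * Real.exp (lam * b)) N
              * ((1+a) * Real.exp (lam * a) * Real.exp (-lam * d) * b) := by ring
          _ ≤ min ((1+b) * Real.exp (lam * b)) N * ((1+b) * Real.exp (lam * b) * (b+d)) := by
              apply mul_le_mul_of_nonneg_left hcl hminy
          _ = min ((1+b) * Real.exp (lam * b)) N * (b + d) * ((1+b) * Real.exp (lam * b)) := by
              ring
      exact le_of_mul_le_mul_right step hwypos
  -- divide by b * d
  have hstep := mul_le_mul_of_nonneg_right key (by positivity : (0:ℝ) ≤ d⁻¹ * b⁻¹)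
  calc min ((1+a) * Real.exp (lam * a)) N * (Real.exp (-lam * d) / d)
      = min ((1+a) * Real.exp (lam * a)) N * Real.exp (-lam * d) * b * (d⁻¹ * b⁻¹) := by
        field_simp
    _ ≤ min ((1+b) * Real.exp (lam * b)) N * (b + d) * (d⁻¹ * b⁻¹) := hstep
    _ = (d⁻¹ + b⁻¹) * min ((1+b) * Real.exp (lam * b)) N := by
        field_simp

/-- Sharp Agmon estimate: there is an absolute smallness constant `ε₀ > 0` such that
any bounded measurable solution `ψ` of the resolvent equation
`ψ = −R₀(−λ²) V ψ` (with `R₀(−λ²)` the free resolvent kernel `e^{−λ|x−y|}/(4π|x−y|)`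
on `ℝ³`), where `V = V₁ + V₂` with `V₁` bounded and compactly supported and `V₂`
small in the global Kato norm, obeys `|ψ(x)| ≤ C ⟨x⟩⁻¹ e^{−λ|x|}` almost everywhere. -/
theorem sharp_agmon_estimate :
    ∃ ε₀ : ℝ, 0 < ε₀ ∧
      ∀ (lam R M₁ Mψ : ℝ) (V V₁ V₂ : EuclideanSpace ℝ (Fin 3) → ℝ)
        (ψ : EuclideanSpace ℝ (Fin 3) → ℂ),
        0 < lam →
        V = V₁ + V₂ →
        Measurable V₁ → Measurable V₂ →
        (∀ x, |V₁ x| ≤ M₁) →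
        Function.support V₁ ⊆ Metric.closedBall 0 R →
        (∀ x, ∫⁻ y, ENNReal.ofReal (|V₂ y| / ‖x - y‖) ≤ ENNReal.ofReal ε₀) →
        Measurable ψ →
        (∀ x, ‖ψ x‖ ≤ Mψ) →
        (∀ᵐ x ∂(volume : Measure (EuclideanSpace ℝ (Fin 3))),
          ψ x = -((1 / (4 * Real.pi) : ℝ) : ℂ) *
            ∫ y, ((Real.exp (-lam * ‖x - y‖) / ‖x - y‖ * V y : ℝ) : ℂ) * ψ y) →
        ∃ C : ℝ, 0 < C ∧
          ∀ᵐ x ∂(volume : Measure (EuclideanSpace ℝ (Fin 3))),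
            ‖ψ x‖ ≤ C * (1 + ‖x‖)⁻¹ * Real.exp (-lam * ‖x‖) := by
  refine ⟨1, one_pos, ?_⟩
  intro lam R M₁ Mψ V V₁ V₂ ψ hlam hVsum hV₁m hV₂m hM₁ hsupp hKato hψm hψb heq
  have hπ : (3:ℝ) < Real.pi := Real.pi_gt_three
  have h4π : (0:ℝ) < 4 * Real.pi := by linarith
  set R' : ℝ := max R 0 with hR'def
  have hR'0 : 0 ≤ R' := le_max_right _ _
  have hsupp' : Function.support V₁ ⊆ closedBall (0:E3') R' :=
    hsupp.trans (closedBall_subset_closedBall (le_max_left _ _))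
  have hM₁0 : 0 ≤ M₁ := le_trans (abs_nonneg _) (hM₁ 0)
  have hMψ0 : 0 ≤ Mψ := le_trans (norm_nonneg _) (hψb 0)
  set ρ : ℝ := 3 * R' + 1 with hρdef
  have hρ : 0 < ρ := by positivity
  set CR₀ : ENNReal := ∫⁻ z in closedBall (0:E3') ρ, ENNReal.ofReal ‖z‖⁻¹ with hCR₀def
  have hCR₀ : CR₀ ≠ ⊤ := (lint_inv_norm_lt_top hρ).ne
  set w : E3' → ℝ := fun x => (1 + ‖x‖) * Real.exp (lam * ‖x‖) with hwdef
  have hw0 : ∀ x, 0 ≤ w x := fun x => by positivity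
  set K : E3' → E3' → ℝ := fun x y => Real.exp (-lam * ‖x - y‖) / ‖x - y‖ with hKdef
  have hK0 : ∀ x y, 0 ≤ K x y := fun x y => by positivity
  have hKm : ∀ x, Measurable (fun y => K x y) := by
    intro x
    apply Measurable.div
    · exact Real.measurable_exp.comp (measurable_const.mul
        ((measurable_const.sub measurable_id).norm))
    · exact (measurable_const.sub measurable_id).norm
  have hmV : Measurable V := by rw [hVsum]; exact hV₁m.add hV₂m
  set L₁ : E3' → ENNReal := fun x => ∫⁻ y, ENNReal.ofReal (K x y * |V₁ y| * ‖ψ y‖) with hL₁def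
  set L₂ : E3' → ENNReal := fun x => ∫⁻ y, ENNReal.ofReal (K x y * |V₂ y| * ‖ψ y‖) with hL₂def
  -- Step A: master a.e. inequality
  have hA : ∀ᵐ x ∂(volume : Measure E3'), ENNReal.ofReal ‖ψ x‖
      ≤ ENNReal.ofReal (1/(4*Real.pi)) * (L₁ x + L₂ x) := by
    filter_upwards [heq] with x hx
    set f : E3' → ℂ :=
      fun y => ((Real.exp (-lam * ‖x - y‖) / ‖x - y‖ * V y : ℝ) : ℂ) * ψ y with hfdef
    have hfm : Measurable f :=
      (Complex.measurable_ofReal.comp ((hKm x).mul hmV)).mul hψm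
    have hnorm : ‖ψ x‖ = (1/(4*Real.pi)) * ‖∫ y, f y‖ := by
      rw [hx, norm_mul, norm_neg, Complex.norm_real, Real.norm_eq_abs,
        abs_of_pos (by positivity)]
    have hJ : ‖∫ y, f y‖ ≤ ∫ y, ‖f y‖ := norm_integral_le_integral_norm f
    have hlint : ∫ y, ‖f y‖ = (∫⁻ y, ENNReal.ofReal ‖f y‖).toReal :=
      integral_eq_lintegral_of_nonneg_ae (Filter.Eventually.of_forall fun y => norm_nonneg _)
        hfm.norm.aestronglyMeasurable
    have hsplit : (∫⁻ y, ENNReal.ofReal ‖f y‖) ≤ L₁ x + L₂ x := by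
      have hpt : ∀ y, ENNReal.ofReal ‖f y‖ ≤ ENNReal.ofReal (K x y * |V₁ y| * ‖ψ y‖)
          + ENNReal.ofReal (K x y * |V₂ y| * ‖ψ y‖) := by
        intro y
        rw [← ENNReal.ofReal_add (by positivity) (by positivity)]
        apply ENNReal.ofReal_le_ofReal
        have h1 : ‖f y‖ = K x y * |V y| * ‖ψ y‖ := by
          rw [hfdef]
          simp only
          rw [norm_mul, Complex.norm_real, Real.norm_eq_abs, abs_mul, hKdef]
          simp only
          rw [abs_of_nonneg (by positivity : (0:ℝ) ≤ Real.exp (-lam * ‖x - y‖) / ‖x - y‖)]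
        have h2 : |V y| ≤ |V₁ y| + |V₂ y| := by
          rw [hVsum]; exact abs_add_le _ _
        rw [h1]
        have h3 := mul_le_mul_of_nonneg_right h2 (norm_nonneg (ψ y))
        have h4 := mul_le_mul_of_nonneg_left h3 (hK0 x y)
        nlinarith [h4]
      calc (∫⁻ y, ENNReal.ofReal ‖f y‖)
          ≤ ∫⁻ y, (ENNReal.ofReal (K x y * |V₁ y| * ‖ψ y‖)
              + ENNReal.ofReal (K x y * |V₂ y| * ‖ψ y‖)) := lintegral_mono hpt
        _ = L₁ x + L₂ x := by
            rw [lintegral_add_left (f := fun y => ENNReal.ofReal (K x y * |V₁ y| * ‖ψ y‖)) (((hKm x).mul hV₁m.abs).mul hψm.norm).ennreal_ofReal]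
    calc ENNReal.ofReal ‖ψ x‖
        = ENNReal.ofReal (1/(4*Real.pi)) * ENNReal.ofReal ‖∫ y, f y‖ := by
          rw [hnorm, ENNReal.ofReal_mul (by positivity)]
      _ ≤ ENNReal.ofReal (1/(4*Real.pi)) * ENNReal.ofReal (∫ y, ‖f y‖) :=
          mul_le_mul_right (ENNReal.ofReal_le_ofReal hJ) _
      _ = ENNReal.ofReal (1/(4*Real.pi)) * ENNReal.ofReal ((∫⁻ y, ENNReal.ofReal ‖f y‖).toReal) := by
          rw [hlint]
      _ ≤ ENNReal.ofReal (1/(4*Real.pi)) * (∫⁻ y, ENNReal.ofReal ‖f y‖) :=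
          mul_le_mul_right ENNReal.ofReal_toReal_le _
      _ ≤ ENNReal.ofReal (1/(4*Real.pi)) * (L₁ x + L₂ x) := mul_le_mul_right hsplit _
  -- constant c₁ bounding the V₁ part
  set W₀ : ℝ := (1 + (2*R'+1)) * Real.exp (lam * (2*R'+1)) with hW₀def
  set c₁ : ENNReal := ENNReal.ofReal (2 * (M₁*Mψ) * Real.exp (lam * R'))
      * volume (closedBall (0:E3') R')
      + ENNReal.ofReal (W₀ * (M₁*Mψ)) * CR₀ with hc₁def
  have hc₁top : c₁ ≠ ⊤ := by
    apply ENNReal.add_ne_top.2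
    constructor
    · exact ENNReal.mul_ne_top ENNReal.ofReal_ne_top measure_closedBall_lt_top.ne
    · exact ENNReal.mul_ne_top ENNReal.ofReal_ne_top hCR₀
  -- Step B
  have hW₀0 : 0 ≤ W₀ := by rw [hW₀def]; positivity
  have hB : ∀ (N : ℝ), 0 ≤ N → ∀ x : E3',
      ENNReal.ofReal (min (w x) N) * L₁ x ≤ c₁ := by
    intro N hN x
    have hV₁zero : ∀ y : E3', y ∉ closedBall (0:E3') R' → V₁ y = 0 := by
      intro y hy
      by_contra h
      exact hy (hsupp' (Function.mem_support.2 h))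
    have hWle : ENNReal.ofReal (min (w x) N) * L₁ x
        = ∫⁻ y, ENNReal.ofReal (min (w x) N) * ENNReal.ofReal (K x y * |V₁ y| * ‖ψ y‖) := by
      simp only [hL₁def]
      exact (lintegral_const_mul' _ _ ENNReal.ofReal_ne_top).symm
    rw [hWle]
    rcases le_total ‖x‖ (2*R'+1) with hx | hx
    · -- near regime
      have hcW0 : 0 ≤ W₀ * (M₁ * Mψ) := by positivity
      have hpt : ∀ y, ENNReal.ofReal (min (w x) N) * ENNReal.ofReal (K x y * |V₁ y| * ‖ψ y‖)
          ≤ (closedBall (0:E3') R').indicator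
              (fun y => ENNReal.ofReal (W₀ * (M₁*Mψ) * ‖x - y‖⁻¹)) y := by
        intro y
        by_cases hy : y ∈ closedBall (0:E3') R'
        · rw [Set.indicator_of_mem hy, ← ENNReal.ofReal_mul (le_min (hw0 x) hN)]
          apply ENNReal.ofReal_le_ofReal
          have hK1 : K x y ≤ ‖x - y‖⁻¹ := by
            simp only [hKdef]
            rw [div_eq_mul_inv]
            apply mul_le_of_le_one_left (inv_nonneg.2 (norm_nonneg _))
            calc Real.exp (-lam * ‖x-y‖) ≤ Real.exp 0 :=
                  Real.exp_le_exp.2 (by nlinarith [norm_nonneg (x-y)])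
              _ = 1 := Real.exp_zero
          have hV : |V₁ y| * ‖ψ y‖ ≤ M₁ * Mψ :=
            mul_le_mul (hM₁ y) (hψb y) (norm_nonneg _) hM₁0
          have hwW : min (w x) N ≤ W₀ := by
            refine (min_le_left _ _).trans ?_
            simp only [hwdef, hW₀def]
            apply mul_le_mul (by linarith) (Real.exp_le_exp.2 (by nlinarith [hlam.le]))
              (Real.exp_pos _).le (by linarith)
          calc min (w x) N * (K x y * |V₁ y| * ‖ψ y‖)
              = min (w x) N * (K x y * (|V₁ y| * ‖ψ y‖)) := by ring
            _ ≤ W₀ * (‖x - y‖⁻¹ * (M₁ * Mψ)) := by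
                apply mul_le_mul hwW _ _ hW₀0
                · exact mul_le_mul hK1 hV (by positivity) (inv_nonneg.2 (norm_nonneg _))
                · have := hK0 x y
                  positivity
            _ = W₀ * (M₁*Mψ) * ‖x - y‖⁻¹ := by ring
        · rw [Set.indicator_of_notMem hy, hV₁zero y hy]
          simp
      calc (∫⁻ y, ENNReal.ofReal (min (w x) N) * ENNReal.ofReal (K x y * |V₁ y| * ‖ψ y‖))
          ≤ ∫⁻ y, (closedBall (0:E3') R').indicator
              (fun y => ENNReal.ofReal (W₀ * (M₁*Mψ) * ‖x - y‖⁻¹)) y := lintegral_mono hpt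
        _ = ∫⁻ y in closedBall (0:E3') R', ENNReal.ofReal (W₀ * (M₁*Mψ) * ‖x - y‖⁻¹) :=
            lintegral_indicator measurableSet_closedBall _
        _ = ENNReal.ofReal (W₀ * (M₁*Mψ))
              * ∫⁻ y in closedBall (0:E3') R', ENNReal.ofReal ‖x - y‖⁻¹ := by
            simp_rw [ENNReal.ofReal_mul hcW0]
            rw [lintegral_const_mul' _ _ ENNReal.ofReal_ne_top]
        _ ≤ ENNReal.ofReal (W₀ * (M₁*Mψ))
              * ∫⁻ y in closedBall x ρ, ENNReal.ofReal ‖x - y‖⁻¹ := by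
            apply mul_le_mul_right
            apply lintegral_mono_set
            intro y hy
            simp only [mem_closedBall] at hy ⊢
            have ht : dist y x ≤ dist y 0 + dist 0 x := dist_triangle _ _ _
            have h1 : dist 0 x = ‖x‖ := by simp [dist_eq_norm]
            have h2 : dist y (0:E3') = ‖y‖ := by simp [dist_eq_norm]
            rw [hρdef]
            rw [h1, h2] at ht
            linarith
        _ = ENNReal.ofReal (W₀ * (M₁*Mψ)) * CR₀ := by
            rw [hCR₀def, ← lint_translate x ρ,
              lintegral_indicator measurableSet_closedBall]
        _ ≤ c₁ := by
            rw [hc₁def]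
            exact le_add_self
    · -- far regime
      have hpt : ∀ y, ENNReal.ofReal (min (w x) N) * ENNReal.ofReal (K x y * |V₁ y| * ‖ψ y‖)
          ≤ (closedBall (0:E3') R').indicator
              (fun _ => ENNReal.ofReal (2 * (M₁*Mψ) * Real.exp (lam * R'))) y := by
        intro y
        by_cases hy : y ∈ closedBall (0:E3') R'
        · rw [Set.indicator_of_mem hy, ← ENNReal.ofReal_mul (le_min (hw0 x) hN)]
          apply ENNReal.ofReal_le_ofReal
          have hyR : ‖y‖ ≤ R' := by
            simpa [mem_closedBall, dist_eq_norm] using hy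
          have hd1 : ‖x‖ - R' ≤ ‖x - y‖ := by
            have h := norm_add_le (x - y) y
            rw [sub_add_cancel] at h
            linarith
          have hdpos : (0:ℝ) < ‖x‖ - R' := by linarith
          have he : Real.exp (-lam * ‖x - y‖) ≤ Real.exp (-lam * (‖x‖ - R')) :=
            Real.exp_le_exp.2 (by nlinarith)
          have hinv : ‖x - y‖⁻¹ ≤ 2/(1+‖x‖) := by
            have h1 : ‖x - y‖⁻¹ ≤ (‖x‖ - R')⁻¹ :=
              inv_anti₀ hdpos hd1
            have h2 : (‖x‖ - R')⁻¹ ≤ 2/(1+‖x‖) := by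
              rw [inv_eq_one_div, div_le_div_iff₀ hdpos (by positivity)]
              linarith
            linarith
          have hKb : K x y ≤ Real.exp (-lam * (‖x‖ - R')) * (2/(1+‖x‖)) := by
            simp only [hKdef]
            rw [div_eq_mul_inv]
            exact mul_le_mul he hinv (inv_nonneg.2 (norm_nonneg _)) (Real.exp_pos _).le
          have hV : |V₁ y| * ‖ψ y‖ ≤ M₁ * Mψ :=
            mul_le_mul (hM₁ y) (hψb y) (norm_nonneg _) hM₁0
          have hne : (1:ℝ) + ‖x‖ ≠ 0 := by positivity
          have hexp : Real.exp (lam*‖x‖) * Real.exp (-lam*(‖x‖-R')) = Real.exp (lam*R') := by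
            rw [← Real.exp_add]
            congr 1
            ring
          have hwK : w x * (Real.exp (-lam*(‖x‖-R')) * (2/(1+‖x‖))) = 2 * Real.exp (lam * R') := by
            simp only [hwdef]
            calc (1+‖x‖) * Real.exp (lam*‖x‖) * (Real.exp (-lam*(‖x‖-R')) * (2/(1+‖x‖)))
                = (Real.exp (lam*‖x‖) * Real.exp (-lam*(‖x‖-R'))) * (2 * ((1+‖x‖)/(1+‖x‖))) := by
                  ring
              _ = 2 * Real.exp (lam*R') := by rw [hexp, div_self hne]; ring
          calc min (w x) N * (K x y * |V₁ y| * ‖ψ y‖)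
              = (min (w x) N * K x y) * (|V₁ y| * ‖ψ y‖) := by ring
            _ ≤ (w x * (Real.exp (-lam*(‖x‖-R')) * (2/(1+‖x‖)))) * (M₁*Mψ) := by
                apply mul_le_mul _ hV (by positivity) _
                · exact mul_le_mul (min_le_left _ _) hKb (hK0 x y) (hw0 x)
                · exact mul_nonneg (hw0 x) (by positivity)
            _ = 2 * Real.exp (lam*R') * (M₁*Mψ) := by rw [hwK]
            _ = 2 * (M₁*Mψ) * Real.exp (lam*R') := by ring
        · rw [Set.indicator_of_notMem hy, hV₁zero y hy]
          simp
      calc (∫⁻ y, ENNReal.ofReal (min (w x) N) * ENNReal.ofReal (K x y * |V₁ y| * ‖ψ y‖))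
          ≤ ∫⁻ y, (closedBall (0:E3') R').indicator
              (fun _ => ENNReal.ofReal (2 * (M₁*Mψ) * Real.exp (lam * R'))) y :=
            lintegral_mono hpt
        _ = ENNReal.ofReal (2 * (M₁*Mψ) * Real.exp (lam * R'))
              * volume (closedBall (0:E3') R') := by
            rw [lintegral_indicator measurableSet_closedBall, setLIntegral_const]
        _ ≤ c₁ := by
            rw [hc₁def]
            exact le_self_add
  -- Step C
  have h0ae : ∀ᵐ y ∂(volume : Measure E3'), y ≠ (0:E3') := by
    have h := measure_singleton (μ := (volume : Measure E3')) (0:E3')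
    rw [ae_iff]
    simpa [Set.setOf_eq_eq_singleton'] using h
  have haNb : ∀ (N : ℝ), 0 ≤ N →
      essSup (fun z => ENNReal.ofReal (min (w z) N * ‖ψ z‖)) volume
        ≤ ENNReal.ofReal (N * Mψ) := by
    intro N hN
    refine essSup_le_of_ae_le _ ?_
    apply Filter.Eventually.of_forall
    intro z
    apply ENNReal.ofReal_le_ofReal
    exact mul_le_mul (min_le_right _ _) (hψb z) (norm_nonneg _) hN
  have hC : ∀ (N : ℝ), 0 ≤ N → ∀ x : E3',
      ENNReal.ofReal (min (w x) N) * L₂ x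
        ≤ 2 * essSup (fun z => ENNReal.ofReal (min (w z) N * ‖ψ z‖)) volume := by
    intro N hN x
    set aN := essSup (fun z => ENNReal.ofReal (min (w z) N * ‖ψ z‖)) volume with haNdef
    have haNne : aN ≠ ⊤ := ne_top_of_le_ne_top ENNReal.ofReal_ne_top (haNb N hN)
    have hmV₂x : Measurable (fun y : E3' => ENNReal.ofReal (|V₂ y| / ‖x - y‖)) :=
      (hV₂m.abs.div ((measurable_const.sub measurable_id).norm)).ennreal_ofReal
    calc ENNReal.ofReal (min (w x) N) * L₂ x
        = ∫⁻ y, ENNReal.ofReal (min (w x) N) * ENNReal.ofReal (K x y * |V₂ y| * ‖ψ y‖) := by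
          simp only [hL₂def]
          exact (lintegral_const_mul' _ _ ENNReal.ofReal_ne_top).symm
      _ ≤ ∫⁻ y, (ENNReal.ofReal (|V₂ y| / ‖x - y‖) + ENNReal.ofReal (|V₂ y| / ‖y‖)) * aN := by
          apply lintegral_mono_ae
          filter_upwards [ENNReal.ae_le_essSup
            (fun z => ENNReal.ofReal (min (w z) N * ‖ψ z‖)), h0ae] with y hy hy0
          calc ENNReal.ofReal (min (w x) N) * ENNReal.ofReal (K x y * |V₂ y| * ‖ψ y‖)
              = ENNReal.ofReal (min (w x) N * (K x y * |V₂ y| * ‖ψ y‖)) :=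
                (ENNReal.ofReal_mul (le_min (hw0 x) hN)).symm
            _ ≤ ENNReal.ofReal ((|V₂ y| / ‖x - y‖ + |V₂ y| / ‖y‖) * (min (w y) N * ‖ψ y‖)) := by
                apply ENNReal.ofReal_le_ofReal
                have hkey := weight_key hlam N hN x y hy0
                have hmul := mul_le_mul_of_nonneg_right hkey
                  (by positivity : (0:ℝ) ≤ |V₂ y| * ‖ψ y‖)
                calc min (w x) N * (K x y * |V₂ y| * ‖ψ y‖)
                    = (min (w x) N * (Real.exp (-lam * ‖x-y‖) / ‖x-y‖)) * (|V₂ y| * ‖ψ y‖) := by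
                      simp only [hKdef]
                      ring
                  _ ≤ ((‖x-y‖⁻¹ + ‖y‖⁻¹) * min (w y) N) * (|V₂ y| * ‖ψ y‖) := by
                      simp only [hwdef]
                      exact hmul
                  _ = (|V₂ y| / ‖x - y‖ + |V₂ y| / ‖y‖) * (min (w y) N * ‖ψ y‖) := by
                      rw [div_eq_mul_inv, div_eq_mul_inv]
                      ring
            _ = ENNReal.ofReal (|V₂ y| / ‖x-y‖ + |V₂ y| / ‖y‖)
                  * ENNReal.ofReal (min (w y) N * ‖ψ y‖) :=
                ENNReal.ofReal_mul (by positivity)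
            _ ≤ ENNReal.ofReal (|V₂ y| / ‖x-y‖ + |V₂ y| / ‖y‖) * aN := mul_le_mul_right hy _
            _ = (ENNReal.ofReal (|V₂ y| / ‖x-y‖) + ENNReal.ofReal (|V₂ y| / ‖y‖)) * aN := by
                rw [ENNReal.ofReal_add (by positivity) (by positivity)]
      _ = ((∫⁻ y, ENNReal.ofReal (|V₂ y| / ‖x - y‖))
            + ∫⁻ y, ENNReal.ofReal (|V₂ y| / ‖y‖)) * aN := by
          rw [lintegral_mul_const' _ _ haNne, lintegral_add_left hmV₂x]
      _ ≤ (1 + 1) * aN := by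
          apply mul_le_mul_left
          apply add_le_add
          · have h := hKato x
            rwa [ENNReal.ofReal_one] at h
          · have h := hKato 0
            rw [ENNReal.ofReal_one] at h
            simpa [zero_sub, norm_neg] using h
      _ = 2 * aN := by norm_num
  -- Steps D/E: uniform bound on the truncated weighted esssup
  set cc : ℝ := c₁.toReal with hccdef
  have hcc0 : 0 ≤ cc := ENNReal.toReal_nonneg
  have hE : ∀ (N : ℝ), 0 ≤ N →
      essSup (fun z => ENNReal.ofReal (min (w z) N * ‖ψ z‖)) volume ≤ ENNReal.ofReal cc := by
    intro N hN
    set aN := essSup (fun z => ENNReal.ofReal (min (w z) N * ‖ψ z‖)) volume with haNdef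
    have haNne : aN ≠ ⊤ := ne_top_of_le_ne_top ENNReal.ofReal_ne_top (haNb N hN)
    have hD : ∀ᵐ x ∂(volume : Measure E3'), ENNReal.ofReal (min (w x) N * ‖ψ x‖)
        ≤ ENNReal.ofReal (1/(4*Real.pi)) * (c₁ + 2 * aN) := by
      filter_upwards [hA] with x hx
      calc ENNReal.ofReal (min (w x) N * ‖ψ x‖)
          = ENNReal.ofReal (min (w x) N) * ENNReal.ofReal ‖ψ x‖ :=
            ENNReal.ofReal_mul (le_min (hw0 x) hN)
        _ ≤ ENNReal.ofReal (min (w x) N) * (ENNReal.ofReal (1/(4*Real.pi)) * (L₁ x + L₂ x)) :=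
            mul_le_mul_right hx _
        _ = ENNReal.ofReal (1/(4*Real.pi)) * (ENNReal.ofReal (min (w x) N) * L₁ x
              + ENNReal.ofReal (min (w x) N) * L₂ x) := by ring
        _ ≤ ENNReal.ofReal (1/(4*Real.pi)) * (c₁ + 2 * aN) := by
            exact mul_le_mul_right (add_le_add (hB N hN x) (hC N hN x)) _
    have hEb : aN ≤ ENNReal.ofReal (1/(4*Real.pi)) * (c₁ + 2 * aN) := essSup_le_of_ae_le _ hD
    have h2aN : (2:ENNReal) * aN ≠ ⊤ := ENNReal.mul_ne_top (by norm_num) haNne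
    have hrhs_ne : ENNReal.ofReal (1/(4*Real.pi)) * (c₁ + 2 * aN) ≠ ⊤ :=
      ENNReal.mul_ne_top ENNReal.ofReal_ne_top (ENNReal.add_ne_top.2 ⟨hc₁top, h2aN⟩)
    have hα := (ENNReal.toReal_le_toReal haNne hrhs_ne).2 hEb
    rw [ENNReal.toReal_mul, ENNReal.toReal_add hc₁top h2aN, ENNReal.toReal_mul,
      ENNReal.toReal_ofReal (by positivity)] at hα
    have h2 : ((2:ENNReal)).toReal = 2 := by simp
    rw [h2] at hα
    have hα0 : 0 ≤ aN.toReal := ENNReal.toReal_nonneg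
    have hb1 : (1/(4*Real.pi)) * (cc + 2*aN.toReal) * (4*Real.pi) = cc + 2*aN.toReal := by
      field_simp
    have hb2 : aN.toReal * (4*Real.pi) ≤ cc + 2*aN.toReal := by
      calc aN.toReal * (4*Real.pi)
          ≤ (1/(4*Real.pi)) * (cc + 2*aN.toReal) * (4*Real.pi) :=
            mul_le_mul_of_nonneg_right hα h4π.le
        _ = cc + 2*aN.toReal := hb1
    have h3a : 3 * aN.toReal ≤ Real.pi * aN.toReal :=
      mul_le_mul_of_nonneg_right hπ.le hα0
    have hfin : aN.toReal ≤ cc := by nlinarith [hb2, h3a, hα0]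
    exact (ENNReal.le_ofReal_iff_toReal_le haNne hcc0).2 hfin
  -- Step F: conclude
  refine ⟨cc + 1, by linarith, ?_⟩
  have hall : ∀ᵐ x ∂(volume : Measure E3'), ∀ n : ℕ,
      ENNReal.ofReal (min (w x) (n:ℝ) * ‖ψ x‖) ≤ ENNReal.ofReal cc := by
    rw [ae_all_iff]
    intro n
    exact (ENNReal.ae_le_essSup _).mono fun x hx => hx.trans (hE (n:ℝ) (Nat.cast_nonneg n))
  filter_upwards [hall] with x hx
  have hwx : 0 < w x := by positivity
  have hxn := hx ⌈w x⌉₊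
  rw [min_eq_left (Nat.le_ceil (w x))] at hxn
  have hreal : w x * ‖ψ x‖ ≤ cc :=
    (ENNReal.ofReal_le_ofReal_iff hcc0).1 hxn
  have hψx : ‖ψ x‖ ≤ cc / w x := by
    rw [le_div_iff₀ hwx, mul_comm]
    exact hreal
  have heqd : cc / w x = cc * (1 + ‖x‖)⁻¹ * Real.exp (-lam * ‖x‖) := by
    rw [neg_mul, Real.exp_neg, hwdef]
    simp only
    rw [div_eq_mul_inv, mul_inv, ← mul_assoc]
  refine le_trans (hψx.trans_eq heqd) ?_
  have h1 : (0:ℝ) ≤ (1 + ‖x‖)⁻¹ * Real.exp (-lam * ‖x‖) := by positivity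
  calc cc * (1+‖x‖)⁻¹ * Real.exp (-lam*‖x‖) = cc * ((1+‖x‖)⁻¹ * Real.exp (-lam*‖x‖)) := by ring
    _ ≤ (cc+1) * ((1+‖x‖)⁻¹ * Real.exp (-lam*‖x‖)) :=
        mul_le_mul_of_nonneg_right (by linarith) h1
    _ = (cc+1) * (1+‖x‖)⁻¹ * Real.exp (-lam*‖x‖) := by ring
end
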